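/- Let X be a pointed regular category admitting all cokernels (hence z-exact). Then the following are equivalent: (i) X is homologically self-dual; (ii) every pullback in X of a normal epimorphism along a normal monomorphism is a normal epimorphism. -/

import Mathlib

open CategoryTheory CategoryTheory.Limits

universe v u

variable {C : Type u} [Category.{v} C]

/-- A morphism is a *normal monomorphism* if it is a kernel of some morphism. -/
def IsNormalMonoMap [HasZeroMorphisms C] {X Y : C} (f : X ⟶ Y) : Prop :=
  Nonempty (NormalMono f)

/-- A morphism is a *normal epimorphism* if it is a cokernel of some morphism. -/
def IsNormalEpiMap [HasZeroMorphisms C] {X Y : C} (f : X ⟶ Y) : Prop :=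
  Nonempty (NormalEpi f)

/-- A morphism is *normal* if it factors as a normal epimorphism followed by a
normal monomorphism. -/
def IsNormalMap [HasZeroMorphisms C] {X Y : C} (f : X ⟶ Y) : Prop :=
  ∃ (I : C) (e : X ⟶ I) (m : I ⟶ Y), IsNormalEpiMap e ∧ IsNormalMonoMap m ∧ e ≫ m = f

/-- A morphism is *antinormal* if it factors as a normal monomorphism followed by a
normal epimorphism. -/
def IsAntinormalMap [HasZeroMorphisms C] {X Y : C} (f : X ⟶ Y) : Prop :=
  ∃ (I : C) (m : X ⟶ I) (e : I ⟶ Y), IsNormalMonoMap m ∧ IsNormalEpiMap e ∧ m ≫ e = f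

variable (C) in
/-- A z-exact category is *di-exact* if every antinormal morphism is normal. -/
def IsDiExact [HasZeroMorphisms C] : Prop :=
  ∀ ⦃X Y : C⦄ (f : X ⟶ Y), IsAntinormalMap f → IsNormalMap f

variable (C) in
/-- A z-exact category is *homologically self-dual* if for every totally normal sequence of
monomorphisms `f : X ⟶ Y`, `g : Y ⟶ Z`, the induced morphism `Y/X ⟶ Z/X` between the
cokernels is a normal monomorphism. -/
def IsHomologicallySelfDual [HasZeroMorphisms C] : Prop :=
  ∀ ⦃X Y Z QY QZ : C⦄ (f : X ⟶ Y) (g : Y ⟶ Z),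
    IsNormalMonoMap f → IsNormalMonoMap g → IsNormalMonoMap (f ≫ g) →
    ∀ (p : Y ⟶ QY) (wp : f ≫ p = 0), IsColimit (CokernelCofork.ofπ p wp) →
    ∀ (q : Z ⟶ QZ) (wq : (f ≫ g) ≫ q = 0), IsColimit (CokernelCofork.ofπ q wq) →
    ∀ (u : QY ⟶ QZ), p ≫ u = g ≫ q → IsNormalMonoMap u

/-- The poset of normal subobjects of an object. -/
abbrev NormalSubobject [HasZeroMorphisms C] (A : C) : Type (max u v) :=
  {P : Subobject A // Nonempty (NormalMono P.arrow)}

/-- Modularity of the poset of normal subobjects, expressed via `IsLUB`/`IsGLB`. -/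
def NormalSubobjectsModular [HasZeroMorphisms C] (A : C) : Prop :=
  ∀ P Q R S T U V : NormalSubobject A, R ≤ P →
    IsLUB {Q, R} S → IsGLB {P, S} T → IsGLB {P, Q} U → IsLUB {U, R} V → T = V

/-- Distributivity of the poset of normal subobjects, expressed via `IsLUB`/`IsGLB`. -/
def NormalSubobjectsDistrib [HasZeroMorphisms C] (A : C) : Prop :=
  ∀ P Q R S T U V W : NormalSubobject A,
    IsLUB {Q, R} S → IsGLB {P, S} T → IsGLB {P, Q} U → IsGLB {P, R} V →
    IsLUB {U, V} W → T = W


section Stmt18Aux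

/-- A normal epi is a cokernel of any kernel of it. -/
noncomputable def isCokernelOfNormalEpi [HasZeroMorphisms C] {N A D : C} (e : A ⟶ D)
    (he : NormalEpi e) {n : N ⟶ A} (w : n ≫ e = 0) (hn : IsLimit (KernelFork.ofι n w)) :
    IsColimit (CokernelCofork.ofπ e w) := by
  haveI := he
  haveI : Epi e := inferInstance
  refine CokernelCofork.IsColimit.ofπ' e w fun {T} t ht => ?_
  obtain ⟨l, hl⟩ := KernelFork.IsLimit.lift' hn he.g he.w
  simp only [Fork.ι_ofι] at hl
  exact CokernelCofork.IsColimit.desc' he.isColimit t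
    (by rw [← hl, Category.assoc, ht, comp_zero])

/-- A normal mono is a kernel of any cokernel of it. -/
noncomputable def isKernelOfNormalMono [HasZeroMorphisms C] {B D R : C} (m : B ⟶ D)
    (hm : NormalMono m) {r : D ⟶ R} (w : m ≫ r = 0) (hr : IsColimit (CokernelCofork.ofπ r w)) :
    IsLimit (KernelFork.ofι m w) := by
  haveI := hm
  haveI : Mono m := inferInstance
  refine KernelFork.IsLimit.ofι' m w fun {T} t ht => ?_
  obtain ⟨d, hd⟩ := CokernelCofork.IsColimit.desc' hr hm.g hm.w
  simp only [Cofork.π_ofπ] at hd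
  exact KernelFork.IsLimit.lift' hm.isLimit t
    (by rw [← hd, ← Category.assoc, ht, zero_comp])

theorem stmt18_aux_fwd {C : Type u} [Category.{v} C] [HasZeroObject C] [HasZeroMorphisms C]
    [HasFiniteLimits C] [HasCokernels C]
    (hstab : ∀ {P A B D : C} (p₁ : P ⟶ A) (p₂ : P ⟶ B) (e : A ⟶ D) (g : B ⟶ D),
      IsPullback p₁ p₂ e g → Nonempty (RegularEpi e) → Nonempty (RegularEpi p₂))
    (hHSD : IsHomologicallySelfDual C)
    {P A B D : C} (p₁ : P ⟶ A) (p₂ : P ⟶ B) (e : A ⟶ D) (m : B ⟶ D)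
    (he : IsNormalEpiMap e) (hm : IsNormalMonoMap m) (hpb : IsPullback p₁ p₂ e m) :
    IsNormalEpiMap p₂ := by
  obtain ⟨ne⟩ := he
  obtain ⟨nm⟩ := hm
  haveI := ne; haveI := nm
  haveI : Mono m := inferInstance
  haveI : Epi e := inferInstance
  set n : kernel e ⟶ A := kernel.ι e with hn
  have hne : n ≫ e = 0 := kernel.condition e
  have h0 : n ≫ e = (0 : kernel e ⟶ B) ≫ m := by rw [hne, zero_comp]
  set j : kernel e ⟶ P := hpb.lift n 0 h0 with hjdef
  have hj₁ : j ≫ p₁ = n := hpb.lift_fst n 0 h0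
  have hj₂ : j ≫ p₂ = 0 := hpb.lift_snd n 0 h0
  haveI : Mono (j ≫ p₁) := by rw [hj₁]; exact inferInstance
  haveI : Mono j := mono_of_mono j p₁
  -- j is a kernel of p₂
  have hjker : IsLimit (KernelFork.ofι j hj₂) := by
    refine KernelFork.IsLimit.ofι' j hj₂ fun {T} t ht => ?_
    refine ⟨kernel.lift e (t ≫ p₁) ?_, ?_⟩
    · rw [Category.assoc, hpb.w, ← Category.assoc, ht, zero_comp]
    · apply hpb.hom_ext
      · rw [Category.assoc, hj₁, hn, kernel.lift_ι]
      · rw [Category.assoc, hj₂, comp_zero, ht]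
  -- p₁ is a normal mono
  have wp₁ : p₁ ≫ (e ≫ nm.g) = 0 := by
    rw [← Category.assoc, hpb.w, Category.assoc, nm.w, comp_zero]
  haveI : Mono p₁ := by
    constructor
    intro T a b hab
    apply hpb.hom_ext hab
    rw [← cancel_mono m, Category.assoc, Category.assoc, ← hpb.w,
      ← Category.assoc, hab, Category.assoc]
  have hp₁ker : IsLimit (KernelFork.ofι p₁ wp₁) := by
    refine KernelFork.IsLimit.ofι' p₁ wp₁ fun {T} t ht => ?_
    obtain ⟨l, hl⟩ := KernelFork.IsLimit.lift' nm.isLimit (t ≫ e)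
      (by rw [Category.assoc]; exact ht)
    simp only [Fork.ι_ofι] at hl
    exact ⟨hpb.lift t l hl.symm, hpb.lift_fst t l hl.symm⟩
  -- the composite j ≫ p₁ is a normal mono (it equals n)
  have wjp : (j ≫ p₁) ≫ e = 0 := by rw [hj₁]; exact hne
  have hjpker : IsLimit (KernelFork.ofι (j ≫ p₁) wjp) := by
    refine KernelFork.IsLimit.ofι' (j ≫ p₁) wjp fun {T} t ht => ?_
    exact ⟨kernel.lift e t ht, by rw [hj₁, hn, kernel.lift_ι]⟩
  -- e is a cokernel of j ≫ p₁
  have hecoker : IsColimit (CokernelCofork.ofπ e wjp) := isCokernelOfNormalEpi e ne wjp hjpker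
  -- apply HSD to  ker e ↣ P ↣ A
  have wu : j ≫ p₁ ≫ e = 0 := by rw [← Category.assoc]; exact wjp
  set u : cokernel j ⟶ D := cokernel.desc j (p₁ ≫ e) wu with hudef
  have hu := hHSD j p₁ ⟨⟨B, p₂, hj₂, hjker⟩⟩ ⟨⟨nm.Z, e ≫ nm.g, wp₁, hp₁ker⟩⟩
    ⟨⟨D, e, wjp, hjpker⟩⟩ (cokernel.π j) (cokernel.condition j) (cokernelIsCokernel j)
    e wjp hecoker u (cokernel.π_desc j (p₁ ≫ e) wu)
  obtain ⟨nu⟩ := hu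
  haveI := nu
  haveI : Mono u := inferInstance
  -- the comparison map v : cokernel j ⟶ B
  set v : cokernel j ⟶ B := cokernel.desc j p₂ hj₂ with hvdef
  have hvm : v ≫ m = u := by
    rw [← cancel_epi (cokernel.π j), ← Category.assoc]
    simp [hvdef, hudef, hpb.w]
  haveI : Mono (v ≫ m) := by rw [hvm]; exact inferInstance
  haveI : Mono v := mono_of_mono v m
  obtain ⟨rep₂⟩ := hstab p₁ p₂ e m hpb ⟨NormalEpi.regularEpi e⟩
  haveI : IsRegularEpi p₂ := ⟨⟨rep₂⟩⟩
  haveI : StrongEpi p₂ := inferInstance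
  have hπv : cokernel.π j ≫ v = p₂ := cokernel.π_desc j p₂ hj₂
  haveI : StrongEpi (cokernel.π j ≫ v) := by rw [hπv]; exact inferInstance
  haveI : StrongEpi v := strongEpi_of_strongEpi (cokernel.π j) v
  haveI : IsIso v := isIso_of_mono_of_strongEpi v
  refine ⟨⟨kernel e, j, hj₂, ?_⟩⟩
  refine CokernelCofork.IsColimit.ofπ' p₂ hj₂ fun {T} t ht => ?_
  refine ⟨inv v ≫ cokernel.desc j t ht, ?_⟩
  rw [← hπv, Category.assoc, IsIso.hom_inv_id_assoc, cokernel.π_desc]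

theorem stmt18_aux_bwd {C : Type u} [Category.{v} C] [HasZeroObject C] [HasZeroMorphisms C]
    [HasFiniteLimits C] [HasCokernels C]
    (hPB : ∀ {P A B D : C} (p₁ : P ⟶ A) (p₂ : P ⟶ B) (e : A ⟶ D) (m : B ⟶ D),
        IsNormalEpiMap e → IsNormalMonoMap m → IsPullback p₁ p₂ e m →
        IsNormalEpiMap p₂) :
    IsHomologicallySelfDual C := by
  intro X Y Z QY QZ f g hf hg hfg p wp hp q wq hq u hu
  obtain ⟨ng⟩ := hg
  obtain ⟨nfg⟩ := hfg
  haveI := ng; haveI := nfg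
  haveI : Mono g := inferInstance
  haveI : Mono (f ≫ g) := inferInstance
  have hpepi : Epi p := epi_of_isColimit_cofork hp
  have hqepi : Epi q := epi_of_isColimit_cofork hq
  -- s : QZ ⟶ cokernel g
  set r : Z ⟶ cokernel g := cokernel.π g with hrdef
  have wfgr : (f ≫ g) ≫ r = 0 := by rw [Category.assoc, cokernel.condition, comp_zero]
  obtain ⟨s, hs⟩ := CokernelCofork.IsColimit.desc' hq r wfgr
  simp only [Cofork.π_ofπ] at hs
  have hus : u ≫ s = 0 := by
    rw [← cancel_epi p, comp_zero, ← Category.assoc, hu, Category.assoc, hs,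
      cokernel.condition]
  set k : kernel s ⟶ QZ := kernel.ι s with hkdef
  set ubar : QY ⟶ kernel s := kernel.lift s u hus with hubardef
  have hubark : ubar ≫ k = u := kernel.lift_ι s u hus
  -- pull back q along k
  set v₁ : pullback q k ⟶ Z := pullback.fst q k with hv₁def
  set v₂ : pullback q k ⟶ kernel s := pullback.snd q k with hv₂def
  have hVcomm : v₁ ≫ q = v₂ ≫ k := pullback.condition
  obtain ⟨nv₂⟩ := hPB v₁ v₂ q k ⟨⟨X, f ≫ g, wq, hq⟩⟩
    ⟨⟨_, s, kernel.condition s, kernelIsKernel s⟩⟩ (IsPullback.of_hasPullback q k)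
  -- v₁ kills r, hence factors through g
  have hv₁r : v₁ ≫ r = 0 := by
    rw [← hs, ← Category.assoc, hVcomm, Category.assoc, kernel.condition, comp_zero]
  have hgker : IsLimit (KernelFork.ofι g (cokernel.condition g)) :=
    isKernelOfNormalMono g ng (cokernel.condition g) (cokernelIsCokernel g)
  obtain ⟨v', hv'⟩ := KernelFork.IsLimit.lift' hgker v₁ hv₁r
  simp only [Fork.ι_ofι] at hv'
  -- i : X ⟶ pullback q k  is a kernel of v₂
  have hi0 : (f ≫ g) ≫ q = (0 : X ⟶ kernel s) ≫ k := by rw [wq, zero_comp]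
  set i : X ⟶ pullback q k := pullback.lift (f ≫ g) 0 hi0 with hidef
  have hi₁ : i ≫ v₁ = f ≫ g := pullback.lift_fst _ _ _
  have hi₂ : i ≫ v₂ = 0 := pullback.lift_snd _ _ _
  haveI : Mono (i ≫ v₁) := by rw [hi₁]; exact inferInstance
  haveI : Mono i := mono_of_mono i v₁
  have hfgker : IsLimit (KernelFork.ofι (f ≫ g) wq) := isKernelOfNormalMono (f ≫ g) nfg wq hq
  have hiker : IsLimit (KernelFork.ofι i hi₂) := by
    refine KernelFork.IsLimit.ofι' i hi₂ fun {T} t ht => ?_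
    obtain ⟨l, hl⟩ := KernelFork.IsLimit.lift' hfgker (t ≫ v₁)
      (by rw [Category.assoc, hVcomm, ← Category.assoc, ht, zero_comp])
    simp only [Fork.ι_ofι] at hl
    refine ⟨l, ?_⟩
    apply pullback.hom_ext
    · rw [Category.assoc]
      show l ≫ i ≫ v₁ = t ≫ v₁
      rw [hi₁, hl]
    · rw [Category.assoc]
      show l ≫ i ≫ v₂ = t ≫ v₂
      rw [hi₂, comp_zero, ht]
  have hv₂coker : IsColimit (CokernelCofork.ofπ v₂ hi₂) :=
    isCokernelOfNormalEpi v₂ nv₂ hi₂ hiker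
  have hv₂epi : Epi v₂ := epi_of_isColimit_cofork hv₂coker
  -- ψ : kernel s ⟶ QY
  have hiv' : i ≫ v' = f := by rw [← cancel_mono g, Category.assoc, hv', hi₁]
  obtain ⟨ψ, hψ⟩ := CokernelCofork.IsColimit.desc' hv₂coker (v' ≫ p)
    (by rw [← Category.assoc, hiv', wp])
  simp only [Cofork.π_ofπ] at hψ
  have hψu : ψ ≫ u = k := by
    rw [← cancel_epi v₂, ← Category.assoc, hψ, Category.assoc, hu, ← Category.assoc,
      hv', hVcomm]
  have hψubar : ψ ≫ ubar = 𝟙 (kernel s) := by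
    rw [← cancel_mono k, Category.assoc, hubark, hψu]
    simp
  -- y : Y ⟶ pullback q k  splitting v'
  have hy0 : g ≫ q = (p ≫ ubar) ≫ k := by rw [Category.assoc, hubark, hu]
  set y : Y ⟶ pullback q k := pullback.lift g (p ≫ ubar) hy0 with hydef
  have hy₁ : y ≫ v₁ = g := pullback.lift_fst _ _ _
  have hy₂ : y ≫ v₂ = p ≫ ubar := pullback.lift_snd _ _ _
  have hyv' : y ≫ v' = 𝟙 Y := by
    rw [← cancel_mono g, Category.assoc, hv', hy₁, Category.id_comp]
  have hubarψ : ubar ≫ ψ = 𝟙 QY := by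
    rw [← cancel_epi p, Category.comp_id, ← Category.assoc, ← hy₂, Category.assoc, hψ,
      ← Category.assoc, hyv', Category.id_comp]
  haveI : IsIso ubar := ⟨ψ, hubarψ, hψubar⟩
  haveI : Mono u := by rw [← hubark]; exact mono_comp _ _
  refine ⟨⟨_, s, hus, ?_⟩⟩
  refine KernelFork.IsLimit.ofι' u hus fun {T} t ht => ?_
  refine ⟨kernel.lift s t ht ≫ inv ubar, ?_⟩
  rw [← hubark, Category.assoc, IsIso.inv_hom_id_assoc, kernel.lift_ι]

end Stmt18Aux

/-- Let `C` be a pointed regular category admitting all cokernels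
(hence z-exact): `C` has all finite limits, every kernel pair has a coequalizer, and
regular epimorphisms are stable under pullback.  Then the following are equivalent:
(i) `C` is homologically self-dual;
(ii) every pullback of a normal epimorphism along a normal monomorphism is a normal
epimorphism. -/
theorem stmt18 {C : Type u} [Category.{v} C] [HasZeroObject C] [HasZeroMorphisms C]
    [HasFiniteLimits C] [HasCokernels C]
    (hcoeq : ∀ {A B : C} (f : A ⟶ B),
      HasCoequalizer (pullback.fst f f) (pullback.snd f f))
    (hstab : ∀ {P A B D : C} (p₁ : P ⟶ A) (p₂ : P ⟶ B) (e : A ⟶ D) (g : B ⟶ D),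
      IsPullback p₁ p₂ e g → Nonempty (RegularEpi e) → Nonempty (RegularEpi p₂)) :
    IsHomologicallySelfDual C ↔
      ∀ {P A B D : C} (p₁ : P ⟶ A) (p₂ : P ⟶ B) (e : A ⟶ D) (m : B ⟶ D),
        IsNormalEpiMap e → IsNormalMonoMap m → IsPullback p₁ p₂ e m →
        IsNormalEpiMap p₂ :=
  ⟨fun hHSD _P _A _B _D p₁ p₂ e m he hm hpb =>
      stmt18_aux_fwd @hstab hHSD p₁ p₂ e m he hm hpb,
    fun hPB => stmt18_aux_bwd @hPB⟩
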